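/- Let a finite oriented metric graph be given in which every vertex is boundary-reachable. Let R_e : [0, ℓ e] → ℝ be measurable with 0 < R_min ≤ R_e(s) ≤ R_max for all e and s, let g_e, f_e ∈ L²(0, ℓ e) for every edge e, and let f_V : V → ℝ. Then there exists a primal solution (q, p) of the hydraulic network problem, and it is unique in the sense that if (q, p) and (q̂, p̂) are two primal solutions then q_e = q̂_e almost everywhere on (0, ℓ e) and p_e = p̂_e everywhere on [0, ℓ e] for every edge e. -/

import Mathlib

open MeasureTheory intervalIntegral
open scoped BigOperators

/-- The degree of a vertex `v`: `#{e | src e = v} + #{e | dst e = v}`. -/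
def degree {E V : Type*} [Fintype E] [DecidableEq V] (src dst : E → V) (v : V) : ℕ :=
  (Finset.univ.filter fun e => src e = v).card +
    (Finset.univ.filter fun e => dst e = v).card

/-- A vertex `v` is boundary-reachable if there is a finite walk along edges
(traversed in either direction) from `v` to some vertex of degree one. -/
def BoundaryReachable {E V : Type*} [Fintype E] [DecidableEq V]
    (src dst : E → V) (v : V) : Prop :=
  ∃ b : V, Relation.ReflTransGen
      (fun x y => ∃ e, (src e = x ∧ dst e = y) ∨ (src e = y ∧ dst e = x)) v b ∧
    degree src dst b = 1

/-- A primal solution of the hydraulic network problem on a finite oriented metric graph,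
with resistances `R`, edge data `g`, `f`, and vertex data `fV`.  It consists of edgewise
`L²` fluxes `q`, edgewise absolutely continuous pressures `p` with derivatives
`p' ∈ L²`, continuous across vertices with vertex values `P` vanishing at boundary
vertices, satisfying the two variational identities. -/
def IsPrimalSolution {E V : Type*} [Fintype E] [Fintype V] [DecidableEq V]
    (src dst : E → V) (ℓ : E → ℝ)
    (R g f : E → ℝ → ℝ) (fV : V → ℝ)
    (q p p' : E → ℝ → ℝ) (P : V → ℝ) : Prop :=
  (∀ e, MemLp (q e) 2 (volume.restrict (Set.Ioo (0:ℝ) (ℓ e)))) ∧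
  (∀ e, ∀ x ∈ Set.Icc (0:ℝ) (ℓ e), ∀ y ∈ Set.Icc (0:ℝ) (ℓ e),
    p e y - p e x = ∫ s in x..y, p' e s) ∧
  (∀ e, MemLp (p' e) 2 (volume.restrict (Set.Ioo (0:ℝ) (ℓ e)))) ∧
  (∀ e, p e 0 = P (src e)) ∧
  (∀ e, p e (ℓ e) = P (dst e)) ∧
  (∀ v, degree src dst v = 1 → P v = 0) ∧
  -- (i) the momentum equation against edgewise L² test functions
  (∀ ψ : E → ℝ → ℝ, (∀ e, MemLp (ψ e) 2 (volume.restrict (Set.Ioo (0:ℝ) (ℓ e)))) →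
    (∑ e, ∫ s in Set.Ioo (0:ℝ) (ℓ e), R e s * q e s * ψ e s)
      + (∑ e, ∫ s in Set.Ioo (0:ℝ) (ℓ e), p' e s * ψ e s)
      = ∑ e, ∫ s in Set.Ioo (0:ℝ) (ℓ e), g e s * ψ e s) ∧
  -- (ii) the mass equation against continuous, edgewise H¹ test functions vanishing
  -- at boundary vertices
  (∀ (φ φ' : E → ℝ → ℝ) (Φ : V → ℝ),
    (∀ e, ∀ x ∈ Set.Icc (0:ℝ) (ℓ e), ∀ y ∈ Set.Icc (0:ℝ) (ℓ e),
      φ e y - φ e x = ∫ s in x..y, φ' e s) →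
    (∀ e, MemLp (φ' e) 2 (volume.restrict (Set.Ioo (0:ℝ) (ℓ e)))) →
    (∀ e, φ e 0 = Φ (src e)) →
    (∀ e, φ e (ℓ e) = Φ (dst e)) →
    (∀ v, degree src dst v = 1 → Φ v = 0) →
    (∑ e, ∫ s in Set.Ioo (0:ℝ) (ℓ e), q e s * φ' e s)
      = -(∑ e, ∫ s in Set.Ioo (0:ℝ) (ℓ e), f e s * φ e s) - ∑ v, fV v * Φ v)


section hydAux
open Set
open scoped ENNReal NNReal

lemma hyd_propagate {E V : Type*} [Fintype E] [DecidableEq V] (src dst : E → V) (P : V → ℝ)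
    (hc : ∀ e, P (src e) = P (dst e)) (hb : ∀ v, degree src dst v = 1 → P v = 0)
    {v : V} (h : BoundaryReachable src dst v) : P v = 0 := by
  obtain ⟨b, hw, hdeg⟩ := h
  have key : ∀ {x y : V}, Relation.ReflTransGen
      (fun x y => ∃ e, (src e = x ∧ dst e = y) ∨ (src e = y ∧ dst e = x)) x y → P x = P y := by
    intro x y hw
    induction hw with
    | refl => rfl
    | tail hst hrel ih =>
      obtain ⟨e, he⟩ := hrel
      rcases he with ⟨h1, h2⟩ | ⟨h1, h2⟩
      · rw [ih, ← h1, ← h2]; exact hc e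
      · rw [ih, ← h1, ← h2]; exact (hc e).symm
  rw [key hw]; exact hb b hdeg

lemma hyd_integrable_mul {α : Type*} [MeasurableSpace α] {μ : Measure α} {f g : α → ℝ}
    (hf : MemLp f 2 μ) (hg : MemLp g 2 μ) : Integrable (fun x => f x * g x) μ := by
  have h2 : (1 : ℝ≥0∞) / 1 = 1 / 2 + 1 / 2 := by
    rw [one_div_one, ENNReal.div_add_div_same, one_add_one_eq_two,
      ENNReal.div_self two_ne_zero ENNReal.ofNat_ne_top]
  haveI : ENNReal.HolderTriple 2 2 1 := ⟨by rw [ENNReal.inv_two_add_inv_two, inv_one]⟩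
  have h := hf.smul (r := 1) hg
  have : (g • f) = fun x => f x * g x := by funext x; simp [mul_comm]
  rw [this] at h
  exact memLp_one_iff_integrable.mp h

lemma hyd_integrable_of_mem2 {α : Type*} [MeasurableSpace α] {μ : Measure α}
    [IsFiniteMeasure μ] {f : α → ℝ} (hf : MemLp f 2 μ) : Integrable f μ :=
  memLp_one_iff_integrable.mp (hf.mono_exponent one_le_two)

lemma hyd_sum_group {E V : Type*} [Fintype E] [Fintype V] [DecidableEq V]
    (src dst : E → V) (a b : E → ℝ) (Φ : V → ℝ) :
    ∑ e, (a e * Φ (dst e) - b e * Φ (src e))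
      = ∑ v, Φ v * ((∑ e ∈ Finset.univ.filter fun e => dst e = v, a e)
          - ∑ e ∈ Finset.univ.filter fun e => src e = v, b e) := by
  have h1 : ∑ v, ∑ e ∈ Finset.univ.filter (fun e => dst e = v), Φ v * a e
      = ∑ e, a e * Φ (dst e) := by
    rw [← Finset.sum_fiberwise Finset.univ dst (fun e => a e * Φ (dst e))]
    refine Finset.sum_congr rfl fun v _ => Finset.sum_congr rfl fun e he => ?_
    rw [(Finset.mem_filter.mp he).2]; ring
  have h2 : ∑ v, ∑ e ∈ Finset.univ.filter (fun e => src e = v), Φ v * b e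
      = ∑ e, b e * Φ (src e) := by
    rw [← Finset.sum_fiberwise Finset.univ src (fun e => b e * Φ (src e))]
    refine Finset.sum_congr rfl fun v _ => Finset.sum_congr rfl fun e he => ?_
    rw [(Finset.mem_filter.mp he).2]; ring
  simp only [mul_sub, Finset.mul_sum, Finset.sum_sub_distrib, h1, h2]



-- memLp for continuousOn functions
lemma hyd_finite (L : ℝ) : IsFiniteMeasure (volume.restrict (Ioo (0:ℝ) L)) :=
  ⟨by rw [Measure.restrict_apply_univ]; exact measure_Ioo_lt_top⟩

lemma hyd_res_Icc (L : ℝ) :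
    volume.restrict (Ioo (0:ℝ) L) = volume.restrict (Icc (0:ℝ) L) :=
  Measure.restrict_congr_set Ioo_ae_eq_Icc

lemma hyd_memLp_of_continuousOn {L : ℝ} {h : ℝ → ℝ}
    (hc : ContinuousOn h (Icc 0 L)) : MemLp h 2 (volume.restrict (Ioo 0 L)) := by
  haveI := hyd_finite L
  obtain ⟨C, hC⟩ := isCompact_Icc.exists_bound_of_continuousOn hc
  refine MemLp.of_bound ?_ C ?_
  · have := hc.aestronglyMeasurable (μ := volume) measurableSet_Icc
    rwa [← hyd_res_Icc] at this
  · filter_upwards [ae_restrict_mem measurableSet_Ioo] with s hs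
    exact hC s (Ioo_subset_Icc_self hs)

lemma hyd_memLp_mul {L Rmax : ℝ} {Rf h : ℝ → ℝ}
    (hm : Measurable Rf) (hb : ∀ s ∈ Icc (0:ℝ) L, |Rf s| ≤ Rmax)
    (hh : MemLp h 2 (volume.restrict (Ioo 0 L))) :
    MemLp (fun s => Rf s * h s) 2 (volume.restrict (Ioo 0 L)) := by
  have htop : MemLp Rf ⊤ (volume.restrict (Ioo 0 L)) := by
    refine memLp_top_of_bound hm.aestronglyMeasurable Rmax ?_
    filter_upwards [ae_restrict_mem measurableSet_Ioo] with s hs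
    exact hb s (Ioo_subset_Icc_self hs)
  have := hh.smul (r := 2) htop
  have heq : (Rf • h) = fun s => Rf s * h s := by funext s; simp [mul_comm]
  rwa [heq] at this

lemma hyd_ibp {L : ℝ} (hL : 0 < L) (f φ φd : ℝ → ℝ) (α : ℝ)
    (hf : IntegrableOn f (Ioo 0 L))
    (hφd : IntegrableOn φd (Ioo 0 L))
    (hftc : ∀ x ∈ Icc (0:ℝ) L, ∀ y ∈ Icc (0:ℝ) L, φ y - φ x = ∫ s in x..y, φd s) :
    ∫ s in Ioo 0 L, (α + ∫ t in (0:ℝ)..s, f t) * φd s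
      = (α + ∫ s in Ioo 0 L, f s) * φ L - α * φ 0 - ∫ s in Ioo 0 L, f s * φ s := by
  have hres : volume.restrict (Ioo (0:ℝ) L) = volume.restrict (Icc (0:ℝ) L) :=
    Measure.restrict_congr_set Ioo_ae_eq_Icc
  have hresoc : volume.restrict (Ioo (0:ℝ) L) = volume.restrict (Ioc (0:ℝ) L) :=
    Measure.restrict_congr_set Ioo_ae_eq_Ioc
  have hfIcc : IntegrableOn f (Icc 0 L) := by rwa [IntegrableOn, ← hres]
  have hφdIcc : IntegrableOn φd (Icc 0 L) := by rwa [IntegrableOn, ← hres]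
  set μ := volume.restrict (Ioo (0:ℝ) L) with hμ
  haveI : IsFiniteMeasure μ := hyd_finite L
  -- φ is continuous on [0, L]
  have huIcc : uIcc (0:ℝ) L = Icc 0 L := uIcc_of_le hL.le
  have hφrep : ∀ x ∈ Icc (0:ℝ) L, φ x = φ 0 + ∫ t in (0:ℝ)..x, φd t := by
    intro x hx
    have := hftc 0 ⟨le_rfl, hL.le⟩ x hx
    linarith [this]
  have hφc : ContinuousOn φ (Icc 0 L) := by
    have hc : ContinuousOn (fun x => φ 0 + ∫ t in (0:ℝ)..x, φd t) (Icc 0 L) := by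
      have := (continuousOn_const (c := φ 0)).add
        (intervalIntegral.continuousOn_primitive_interval (μ := volume) (a := (0:ℝ)) (b := L)
          (f := φd) (by rwa [huIcc]))
      rwa [huIcc] at this
    exact hc.congr fun x hx => hφrep x hx
  -- bound for φ
  obtain ⟨Cφ, hCφ⟩ := isCompact_Icc.exists_bound_of_continuousOn hφc
  -- the primitive of f
  set F : ℝ → ℝ := fun s => ∫ t in (0:ℝ)..s, f t with hF
  have hFc : ContinuousOn F (Icc 0 L) := by
    have := intervalIntegral.continuousOn_primitive_interval (μ := volume) (a := (0:ℝ)) (b := L)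
      (f := f) (by rwa [huIcc])
    rwa [huIcc] at this
  obtain ⟨CF, hCF⟩ := isCompact_Icc.exists_bound_of_continuousOn hFc
  have hφm : AEStronglyMeasurable φ μ := by
    rw [hres]; exact hφc.aestronglyMeasurable measurableSet_Icc
  have hFm : AEStronglyMeasurable F μ := by
    rw [hres]; exact hFc.aestronglyMeasurable measurableSet_Icc
  have haeIcc : ∀ᵐ s ∂μ, s ∈ Icc (0:ℝ) L := by
    filter_upwards [ae_restrict_mem measurableSet_Ioo] with s hs
    exact Ioo_subset_Icc_self hs
  have hfφ : Integrable (fun s => f s * φ s) μ := by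
    have h' := Integrable.bdd_mul (c := Cφ) hf hφm
      (by filter_upwards [haeIcc] with s hs using hCφ s hs)
    exact h'.congr (Filter.Eventually.of_forall fun s => mul_comm _ _)
  have hFφd : Integrable (fun s => F s * φd s) μ := by
    have h' := Integrable.bdd_mul (c := CF) hφd hFm
      (by filter_upwards [haeIcc] with s hs using hCF s hs)
    exact h'
  -- the Fubini kernel
  set K : ℝ × ℝ → ℝ :=
    (fun z : ℝ × ℝ => Set.indicator {w : ℝ × ℝ | w.2 ≤ w.1} (fun w => φd w.1 * f w.2) z) with hK
  have hKi : Integrable K (μ.prod μ) :=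
    (Integrable.mul_prod hφd hf).indicator (measurableSet_le measurable_snd measurable_fst)
  have hswap := MeasureTheory.integral_integral_swap (μ := μ) (ν := μ)
    (f := fun s t => K (s, t)) (by exact hKi)
  -- inner integral, first form
  have hinner1 : ∀ s ∈ Ioo (0:ℝ) L, (∫ t, K (s, t) ∂μ) = φd s * F s := by
    intro s hs
    have hKs : (fun t => K (s, t)) = Set.indicator (Iic s) (fun t => φd s * f t) := by
      funext t
      simp only [hK, Set.indicator_apply, Set.mem_setOf_eq, Set.mem_Iic]
    rw [hKs, MeasureTheory.integral_indicator measurableSet_Iic, hμ,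
      Measure.restrict_restrict measurableSet_Iic]
    have hset : Iic s ∩ Ioo 0 L = Ioc (0:ℝ) s := by
      ext t
      simp only [Set.mem_inter_iff, Set.mem_Iic, Set.mem_Ioo, Set.mem_Ioc]
      constructor
      · rintro ⟨h1, h2, h3⟩; exact ⟨h2, h1⟩
      · rintro ⟨h1, h2⟩; exact ⟨h2, h1, lt_of_le_of_lt h2 hs.2⟩
    rw [hset, MeasureTheory.integral_const_mul]
    congr 1
    simp only [hF]
    exact (intervalIntegral.integral_of_le hs.1.le).symm
  -- inner integral, second form
  have hinner2 : ∀ t ∈ Ioo (0:ℝ) L, (∫ s, K (s, t) ∂μ) = f t * (φ L - φ t) := by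
    intro t ht
    have hKt : (fun s => K (s, t)) = Set.indicator (Ici t) (fun s => φd s * f t) := by
      funext s
      simp only [hK, Set.indicator_apply, Set.mem_setOf_eq, Set.mem_Ici]
    rw [hKt, MeasureTheory.integral_indicator measurableSet_Ici, hμ,
      Measure.restrict_restrict measurableSet_Ici]
    have hset : Ici t ∩ Ioo 0 L = Ico t L := by
      ext s
      simp only [Set.mem_inter_iff, Set.mem_Ici, Set.mem_Ioo, Set.mem_Ico]
      constructor
      · rintro ⟨h1, h2, h3⟩; exact ⟨h1, h3⟩
      · rintro ⟨h1, h2⟩; exact ⟨h1, lt_of_lt_of_le ht.1 h1, h2⟩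
    rw [hset, MeasureTheory.integral_mul_const,
      Measure.restrict_congr_set Ico_ae_eq_Ioc,
      ← intervalIntegral.integral_of_le ht.2.le,
      ← hftc t (Ioo_subset_Icc_self ht) L ⟨hL.le, le_rfl⟩]
    ring
  -- rewrite the two iterated integrals
  have hL1 : ∫ s, ∫ t, K (s, t) ∂μ ∂μ = ∫ s, φd s * F s ∂μ := by
    refine integral_congr_ae ?_
    filter_upwards [ae_restrict_mem measurableSet_Ioo] with s hs
    exact hinner1 s hs
  have hL2 : ∫ t, ∫ s, K (s, t) ∂μ ∂μ = ∫ t, f t * (φ L - φ t) ∂μ := by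
    refine integral_congr_ae ?_
    filter_upwards [ae_restrict_mem measurableSet_Ioo] with t ht
    exact hinner2 t ht
  have hdouble : ∫ s, φd s * F s ∂μ = ∫ t, f t * (φ L - φ t) ∂μ := by
    rw [← hL1, ← hL2]; exact hswap
  -- compute the right-hand side of hdouble
  have hfconst : Integrable (fun t => f t * φ L) μ := hf.mul_const _
  have hRHS : ∫ t, f t * (φ L - φ t) ∂μ = (∫ s, f s ∂μ) * φ L - ∫ s, f s * φ s ∂μ := by
    have he : (fun t => f t * (φ L - φ t)) = fun t => f t * φ L - f t * φ t := by
      funext t; ring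
    rw [he, integral_sub hfconst hfφ, MeasureTheory.integral_mul_const]
  -- total integral of φd
  have hφdtot : ∫ s, φd s ∂μ = φ L - φ 0 := by
    rw [hresoc, ← intervalIntegral.integral_of_le hL.le,
      ← hftc 0 ⟨le_rfl, hL.le⟩ L ⟨hL.le, le_rfl⟩]
  -- expand the left-hand side of the goal
  have hexp : ∫ s, (α + F s) * φd s ∂μ
      = α * (∫ s, φd s ∂μ) + ∫ s, F s * φd s ∂μ := by
    rw [show (fun s => (α + F s) * φd s) = fun s => α * φd s + F s * φd s from
        funext fun s => by ring,
      integral_add (hφd.const_mul α) hFφd, MeasureTheory.integral_const_mul]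
  have hmulc : ∫ s, F s * φd s ∂μ = ∫ s, φd s * F s ∂μ := by
    simp_rw [mul_comm]
  have main : ∫ s, (α + F s) * φd s ∂μ
      = (α + ∫ s, f s ∂μ) * φ L - α * φ 0 - ∫ s, f s * φ s ∂μ := by
    rw [hexp, hmulc, hdouble, hRHS, hφdtot]; ring
  exact main

end hydAux

/-- Well-posedness of the primal formulation of the hydraulic network model:
on a finite oriented metric graph in which every vertex is boundary-reachable, with
measurable resistances bounded above and below by positive constants and `L²` data,
there exists a primal solution, and it is unique in the sense that the flux is unique
almost everywhere on every edge and the pressure is unique everywhere on every edge. -/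
theorem primal_hydraulic_wellposed
    {E V : Type*} [Fintype E] [Fintype V] [DecidableEq V]
    (src dst : E → V) (ℓ : E → ℝ) (hℓ : ∀ e, 0 < ℓ e)
    (hreach : ∀ v : V, BoundaryReachable src dst v)
    (R : E → ℝ → ℝ) (Rmin Rmax : ℝ) (hRmin : 0 < Rmin)
    (hRmeas : ∀ e, Measurable (R e))
    (hRbound : ∀ e, ∀ s ∈ Set.Icc (0:ℝ) (ℓ e), Rmin ≤ R e s ∧ R e s ≤ Rmax)
    (g f : E → ℝ → ℝ)
    (hg : ∀ e, MemLp (g e) 2 (volume.restrict (Set.Ioo (0:ℝ) (ℓ e))))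
    (hf : ∀ e, MemLp (f e) 2 (volume.restrict (Set.Ioo (0:ℝ) (ℓ e))))
    (fV : V → ℝ) :
    (∃ q p p' P, IsPrimalSolution src dst ℓ R g f fV q p p' P) ∧
    (∀ q p p' P q₂ p₂ p₂' P₂,
      IsPrimalSolution src dst ℓ R g f fV q p p' P →
      IsPrimalSolution src dst ℓ R g f fV q₂ p₂ p₂' P₂ →
      (∀ e, ∀ᵐ s ∂(volume.restrict (Set.Ioo (0:ℝ) (ℓ e))), q e s = q₂ e s) ∧
      (∀ e, ∀ x ∈ Set.Icc (0:ℝ) (ℓ e), p e x = p₂ e x)) := by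
  classical
  constructor
  · -- existence
    have hfin : ∀ e, IsFiniteMeasure (volume.restrict (Set.Ioo (0:ℝ) (ℓ e))) :=
      fun e => hyd_finite (ℓ e)
    have hRabs : ∀ e, ∀ s ∈ Set.Icc (0:ℝ) (ℓ e), |R e s| ≤ Rmax := by
      intro e s hs
      obtain ⟨h1, h2⟩ := hRbound e s hs
      rw [abs_of_pos (lt_of_lt_of_le hRmin h1)]; exact h2
    -- basic integrability of the data
    have hfInt : ∀ e, IntegrableOn (f e) (Set.Ioo 0 (ℓ e)) volume := fun e => by
      haveI := hfin e; exact hyd_integrable_of_mem2 (hf e)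
    have hgInt : ∀ e, IntegrableOn (g e) (Set.Ioo 0 (ℓ e)) volume := fun e => by
      haveI := hfin e; exact hyd_integrable_of_mem2 (hg e)
    have hRInt : ∀ e, IntegrableOn (R e) (Set.Ioo 0 (ℓ e)) volume := fun e => by
      haveI := hfin e
      refine memLp_one_iff_integrable.mp (MemLp.of_bound
        (hRmeas e).aestronglyMeasurable Rmax ?_)
      filter_upwards [ae_restrict_mem measurableSet_Ioo] with s hs
      exact hRabs e s (Set.Ioo_subset_Icc_self hs)
    have hfIcc : ∀ e, IntegrableOn (f e) (Set.Icc 0 (ℓ e)) volume := fun e => by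
      have h0 := hfInt e
      rwa [IntegrableOn, hyd_res_Icc] at h0
    -- the primitive of f on each edge, continuous on Icc
    have hFc : ∀ e, ContinuousOn (fun s => ∫ t in (0:ℝ)..s, f e t) (Set.Icc 0 (ℓ e)) := by
      intro e
      have := intervalIntegral.continuousOn_primitive_interval (μ := volume) (a := (0:ℝ))
        (b := ℓ e) (f := f e) (by rw [Set.uIcc_of_le (hℓ e).le]; exact hfIcc e)
      rwa [Set.uIcc_of_le (hℓ e).le] at this
    -- total quantities
    set A : E → ℝ := fun e => ∫ s in Set.Ioo (0:ℝ) (ℓ e), R e s with hAdef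
    set G : E → ℝ := fun e => ∫ s in Set.Ioo (0:ℝ) (ℓ e), g e s with hGdef
    set Fl : E → ℝ := fun e => ∫ s in Set.Ioo (0:ℝ) (ℓ e), f e s with hFldef
    set B : E → ℝ := fun e =>
      ∫ s in Set.Ioo (0:ℝ) (ℓ e), R e s * ∫ t in (0:ℝ)..s, f e t with hBdef
    have hApos : ∀ e, 0 < A e := by
      intro e
      have hlow : Rmin * (volume (Set.Ioo (0:ℝ) (ℓ e))).toReal
          ≤ ∫ s in Set.Ioo (0:ℝ) (ℓ e), R e s := by
        have := setIntegral_mono_on (μ := volume)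
          (integrableOn_const (C := Rmin) measure_Ioo_lt_top.ne) (hRInt e)
          measurableSet_Ioo
          (fun s hs => (hRbound e s (Set.Ioo_subset_Icc_self hs)).1)
        rw [setIntegral_const, smul_eq_mul, mul_comm, measureReal_def] at this
        linarith
      have hvol : (volume (Set.Ioo (0:ℝ) (ℓ e))).toReal = ℓ e := by
        rw [Real.volume_Ioo, ENNReal.toReal_ofReal (by linarith [hℓ e])]; ring_nf
      have hpos : 0 < Rmin * (volume (Set.Ioo (0:ℝ) (ℓ e))).toReal := by
        rw [hvol]; exact mul_pos hRmin (hℓ e)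
      exact lt_of_lt_of_le hpos hlow
    -- the grounded weighted Laplacian
    set T : (V → ℝ) →ₗ[ℝ] (V → ℝ) := {
      toFun := fun Q v => if degree src dst v = 1 then Q v else
        (∑ e ∈ Finset.univ.filter fun e => dst e = v, (Q (dst e) - Q (src e)) / A e)
          - ∑ e ∈ Finset.univ.filter fun e => src e = v, (Q (dst e) - Q (src e)) / A e
      map_add' := by
        intro Q1 Q2; funext v
        simp only [Pi.add_apply]
        split_ifs with hv
        · rfl
        · have he : ∀ e : E, ((Q1 (dst e) + Q2 (dst e)) - (Q1 (src e) + Q2 (src e))) / A e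
              = (Q1 (dst e) - Q1 (src e)) / A e + (Q2 (dst e) - Q2 (src e)) / A e := by
            intro e; rw [← add_div]; ring_nf
          simp only [he, Finset.sum_add_distrib]; ring
      map_smul' := by
        intro c Q; funext v
        simp only [Pi.smul_apply, smul_eq_mul, RingHom.id_apply]
        split_ifs with hv
        · rfl
        · have he : ∀ e : E, (c * Q (dst e) - c * Q (src e)) / A e
              = c * ((Q (dst e) - Q (src e)) / A e) := by
            intro e; rw [← mul_sub, mul_div_assoc]
          simp only [he, ← Finset.mul_sum]; ring } with hTdef
    -- injectivity of T via the energy identity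
    have hTzero : ∀ Q : V → ℝ, T Q = 0 → Q = 0 := by
      intro Q hQ
      have hQv : ∀ v, T Q v = 0 := fun v => congrFun hQ v
      have hQbd : ∀ v, degree src dst v = 1 → Q v = 0 := by
        intro v hv
        have := hQv v
        simpa only [hTdef, LinearMap.coe_mk, AddHom.coe_mk, if_pos hv] using this
      have hQint : ∀ v, degree src dst v ≠ 1 →
          (∑ e ∈ Finset.univ.filter fun e => dst e = v, (Q (dst e) - Q (src e)) / A e)
            - ∑ e ∈ Finset.univ.filter fun e => src e = v,
              (Q (dst e) - Q (src e)) / A e = 0 := by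
        intro v hv
        have := hQv v
        simpa only [hTdef, LinearMap.coe_mk, AddHom.coe_mk, if_neg hv] using this
      have henergy := hyd_sum_group src dst
        (fun e => (Q (dst e) - Q (src e)) / A e)
        (fun e => (Q (dst e) - Q (src e)) / A e) Q
      have hzero : ∑ e, ((Q (dst e) - Q (src e)) / A e * Q (dst e)
          - (Q (dst e) - Q (src e)) / A e * Q (src e)) = 0 := by
        rw [henergy]
        refine Finset.sum_eq_zero fun v _ => ?_
        by_cases hv : degree src dst v = 1
        · rw [hQbd v hv]; ring
        · rw [hQint v hv]; ring
      have hsq : ∑ e, (Q (dst e) - Q (src e)) * (Q (dst e) - Q (src e)) / A e = 0 := by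
        rw [← hzero]
        refine Finset.sum_congr rfl fun e _ => ?_
        field_simp
      have hDzero : ∀ e : E, Q (dst e) - Q (src e) = 0 := by
        intro e
        have hnn : ∀ e' : E, (0:ℝ) ≤ (Q (dst e') - Q (src e')) * (Q (dst e') - Q (src e')) / A e' :=
          fun e' => div_nonneg (mul_self_nonneg _) (hApos e').le
        have := (Finset.sum_eq_zero_iff_of_nonneg (fun e' _ => hnn e')).mp hsq e
          (Finset.mem_univ e)
        rcases div_eq_zero_iff.mp this with h' | h'
        · exact mul_self_eq_zero.mp h'
        · exact absurd h' (ne_of_gt (hApos e))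
      funext v
      show Q v = 0
      refine hyd_propagate src dst Q ?_ hQbd (hreach v)
      intro e
      have := hDzero e
      linarith
    have hTinj : Function.Injective T := by
      intro a b hab
      have : T (a - b) = 0 := by rw [map_sub, hab, sub_self]
      have := hTzero _ this
      exact sub_eq_zero.mp this
    have hTsurj : Function.Surjective T := LinearMap.injective_iff_surjective.mp hTinj
    -- right-hand side of the linear system
    obtain ⟨P, hP⟩ := hTsurj (fun v => if degree src dst v = 1 then 0 else
      fV v + ((∑ e ∈ Finset.univ.filter fun e => dst e = v, ((G e - B e) / A e + Fl e))
        - ∑ e ∈ Finset.univ.filter fun e => src e = v, (G e - B e) / A e))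
    have hPbd : ∀ v, degree src dst v = 1 → P v = 0 := by
      intro v hv
      have h1 := congrFun hP v
      simpa only [hTdef, LinearMap.coe_mk, AddHom.coe_mk, if_pos hv] using h1
    have hKirch : ∀ v, degree src dst v ≠ 1 →
        (∑ e ∈ Finset.univ.filter fun e => dst e = v, (P (dst e) - P (src e)) / A e)
          - ∑ e ∈ Finset.univ.filter fun e => src e = v, (P (dst e) - P (src e)) / A e
        = fV v + ((∑ e ∈ Finset.univ.filter fun e => dst e = v, ((G e - B e) / A e + Fl e))
            - ∑ e ∈ Finset.univ.filter fun e => src e = v, (G e - B e) / A e) := by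
      intro v hv
      have h1 := congrFun hP v
      simpa only [hTdef, LinearMap.coe_mk, AddHom.coe_mk, if_neg hv] using h1
    -- the solution
    set α : E → ℝ := fun e => (G e - B e - (P (dst e) - P (src e))) / A e with hαdef
    set q : E → ℝ → ℝ := fun e s => α e + ∫ t in (0:ℝ)..s, f e t with hqdef
    set p' : E → ℝ → ℝ := fun e s => g e s - R e s * q e s with hp'def
    set p : E → ℝ → ℝ := fun e x => P (src e) + ∫ t in (0:ℝ)..x, p' e t with hpdef
    have hq2 : ∀ e, MemLp (q e) 2 (volume.restrict (Set.Ioo (0:ℝ) (ℓ e))) := by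
      intro e
      simp only [hqdef]
      exact hyd_memLp_of_continuousOn (continuousOn_const.add (hFc e))
    have hRq2 : ∀ e, MemLp (fun s => R e s * q e s) 2
        (volume.restrict (Set.Ioo (0:ℝ) (ℓ e))) :=
      fun e => hyd_memLp_mul (hRmeas e) (hRabs e) (hq2 e)
    have hp'2 : ∀ e, MemLp (p' e) 2 (volume.restrict (Set.Ioo (0:ℝ) (ℓ e))) := by
      intro e
      simp only [hp'def]
      exact (hg e).sub (hRq2 e)
    have hRqInt : ∀ e, IntegrableOn (fun s => R e s * q e s) (Set.Ioo 0 (ℓ e)) volume :=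
      fun e => by haveI := hfin e; exact hyd_integrable_of_mem2 (hRq2 e)
    have hRFInt : ∀ e, IntegrableOn (fun s => R e s * ∫ t in (0:ℝ)..s, f e t)
        (Set.Ioo 0 (ℓ e)) volume := by
      intro e
      haveI := hfin e
      obtain ⟨C, hC⟩ := isCompact_Icc.exists_bound_of_continuousOn (hFc e)
      have hFm : AEStronglyMeasurable (fun s => ∫ t in (0:ℝ)..s, f e t)
          (volume.restrict (Set.Ioo 0 (ℓ e))) := by
        rw [hyd_res_Icc]
        exact (hFc e).aestronglyMeasurable (μ := volume) measurableSet_Icc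
      have h' := Integrable.bdd_mul (c := C) (hRInt e) hFm
        (by filter_upwards [ae_restrict_mem measurableSet_Ioo] with s hs
            using hC s (Set.Ioo_subset_Icc_self hs))
      exact h'.congr (Filter.Eventually.of_forall fun s => mul_comm _ _)
    have hp'int : ∀ e, IntegrableOn (p' e) (Set.Ioo 0 (ℓ e)) volume :=
      fun e => by haveI := hfin e; exact hyd_integrable_of_mem2 (hp'2 e)
    have hp'Icc : ∀ e, IntegrableOn (p' e) (Set.Icc 0 (ℓ e)) volume := by
      intro e
      have h0 := hp'int e
      rwa [IntegrableOn, hyd_res_Icc] at h0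
    have hIIp' : ∀ e, ∀ x ∈ Set.Icc (0:ℝ) (ℓ e), ∀ y ∈ Set.Icc (0:ℝ) (ℓ e),
        IntervalIntegrable (p' e) volume x y := fun e x hx y hy =>
      ((hp'Icc e).mono_set (Set.uIcc_subset_Icc hx hy)).intervalIntegrable
    -- the integral of p' over a whole edge
    have hRq_split : ∀ e, ∫ s in Set.Ioo (0:ℝ) (ℓ e), R e s * q e s = α e * A e + B e := by
      intro e
      have h2 : (fun s => R e s * q e s)
          = fun s => α e * R e s + R e s * ∫ t in (0:ℝ)..s, f e t := by
        funext s; simp only [hqdef]; ring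
      rw [h2, integral_add ((hRInt e).const_mul (α e)) (hRFInt e),
        MeasureTheory.integral_const_mul]
    have hint_p' : ∀ e, ∫ s in Set.Ioo (0:ℝ) (ℓ e), p' e s = P (dst e) - P (src e) := by
      intro e
      have h1 : ∫ s in Set.Ioo (0:ℝ) (ℓ e), p' e s
          = (∫ s in Set.Ioo (0:ℝ) (ℓ e), g e s)
            - ∫ s in Set.Ioo (0:ℝ) (ℓ e), R e s * q e s := by
        simp only [hp'def]
        exact integral_sub (hgInt e) (hRqInt e)
      rw [h1, hRq_split e]
      have hαA : α e * A e = G e - B e - (P (dst e) - P (src e)) := by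
        simp only [hαdef]; exact div_mul_cancel₀ _ (ne_of_gt (hApos e))
      rw [hαA]
      simp only [hGdef]
      ring
    refine ⟨q, p, p', P, hq2, ?_, hp'2, ?_, ?_, hPbd, ?_, ?_⟩
    · -- FTC for p
      intro e x hx y hy
      simp only [hpdef]
      have hsub := intervalIntegral.integral_interval_sub_left (μ := volume) (f := p' e)
        (hIIp' e 0 ⟨le_rfl, (hℓ e).le⟩ y hy) (hIIp' e 0 ⟨le_rfl, (hℓ e).le⟩ x hx)
      linarith [hsub]
    · -- p e 0 = P (src e)
      intro e
      simp only [hpdef, intervalIntegral.integral_same, add_zero]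
    · -- p e (ℓ e) = P (dst e)
      intro e
      have hIoc : ∫ t in (0:ℝ)..(ℓ e), p' e t = ∫ s in Set.Ioo (0:ℝ) (ℓ e), p' e s := by
        rw [intervalIntegral.integral_of_le (hℓ e).le,
          ← Measure.restrict_congr_set (Ioo_ae_eq_Ioc (μ := volume) (a := (0:ℝ)) (b := ℓ e))]
      simp only [hpdef]
      rw [hIoc, hint_p' e]
      ring
    · -- momentum equation
      intro ψ hψ
      have hper : ∀ e, (∫ s in Set.Ioo (0:ℝ) (ℓ e), R e s * q e s * ψ e s)
          + ∫ s in Set.Ioo (0:ℝ) (ℓ e), p' e s * ψ e s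
          = ∫ s in Set.Ioo (0:ℝ) (ℓ e), g e s * ψ e s := by
        intro e
        haveI := hfin e
        rw [← integral_add (hyd_integrable_mul (hRq2 e) (hψ e))
          (hyd_integrable_mul (hp'2 e) (hψ e))]
        refine integral_congr_ae (Filter.Eventually.of_forall fun s => ?_)
        simp only [hp'def]; ring
      rw [← Finset.sum_add_distrib]
      exact Finset.sum_congr rfl fun e _ => hper e
    · -- mass equation
      intro φ φ' Φ hftcφ hφ'2 hφsrc hφdst hφbd
      have hφ'int : ∀ e, IntegrableOn (φ' e) (Set.Ioo 0 (ℓ e)) volume :=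
        fun e => by haveI := hfin e; exact hyd_integrable_of_mem2 (hφ'2 e)
      have hper : ∀ e, ∫ s in Set.Ioo (0:ℝ) (ℓ e), q e s * φ' e s
          = (((α e + Fl e) * Φ (dst e)) - α e * Φ (src e))
            - ∫ s in Set.Ioo (0:ℝ) (ℓ e), f e s * φ e s := by
        intro e
        have hibp := hyd_ibp (hℓ e) (f e) (φ e) (φ' e) (α e) (hfInt e) (hφ'int e) (hftcφ e)
        simp only [hqdef]
        rw [hibp, hφdst e, hφsrc e]
      rw [show (∑ e, ∫ s in Set.Ioo (0:ℝ) (ℓ e), q e s * φ' e s)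
          = ∑ e, ((((α e + Fl e) * Φ (dst e)) - α e * Φ (src e))
            - ∫ s in Set.Ioo (0:ℝ) (ℓ e), f e s * φ e s) from
        Finset.sum_congr rfl fun e _ => hper e]
      rw [Finset.sum_sub_distrib]
      rw [hyd_sum_group src dst (fun e => α e + Fl e) α Φ]
      have hvert : ∀ v, Φ v * ((∑ e ∈ Finset.univ.filter fun e => dst e = v, (α e + Fl e))
          - ∑ e ∈ Finset.univ.filter fun e => src e = v, α e) = -(fV v * Φ v) := by
        intro v
        by_cases hv : degree src dst v = 1
        · rw [hφbd v hv]; ring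
        · have hK := hKirch v hv
          have hα2 : ∀ e : E, α e = (G e - B e) / A e - (P (dst e) - P (src e)) / A e := by
            intro e; simp only [hαdef]; rw [← sub_div]
          have h1 : ∑ e ∈ Finset.univ.filter (fun e => dst e = v), (α e + Fl e)
              = (∑ e ∈ Finset.univ.filter (fun e => dst e = v), ((G e - B e) / A e + Fl e))
                - ∑ e ∈ Finset.univ.filter (fun e => dst e = v),
                  (P (dst e) - P (src e)) / A e := by
            rw [← Finset.sum_sub_distrib]
            exact Finset.sum_congr rfl fun e _ => by rw [hα2 e]; ring
          have h2 : ∑ e ∈ Finset.univ.filter (fun e => src e = v), α e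
              = (∑ e ∈ Finset.univ.filter (fun e => src e = v), (G e - B e) / A e)
                - ∑ e ∈ Finset.univ.filter (fun e => src e = v),
                  (P (dst e) - P (src e)) / A e := by
            rw [← Finset.sum_sub_distrib]
            exact Finset.sum_congr rfl fun e _ => by rw [hα2 e]
          have hS : (∑ e ∈ Finset.univ.filter (fun e => dst e = v), (α e + Fl e))
              - ∑ e ∈ Finset.univ.filter (fun e => src e = v), α e = - fV v := by
            rw [h1, h2]
            linarith [hK]
          rw [hS]; ring
      rw [show (∑ v, Φ v * ((∑ e ∈ Finset.univ.filter fun e => dst e = v, (α e + Fl e))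
          - ∑ e ∈ Finset.univ.filter fun e => src e = v, α e)) = ∑ v, -(fV v * Φ v) from
        Finset.sum_congr rfl fun v _ => hvert v]
      rw [Finset.sum_neg_distrib]
      ring


  · -- uniqueness
    rintro q p p' P q₂ p₂ p₂' P₂
      ⟨hq2, hftc, hp'2, hsrc, hdst, hbd, hmom, hmass⟩
      ⟨hq2', hftc', hp'2', hsrc', hdst', hbd', hmom', hmass'⟩
    have hfin : ∀ e, IsFiniteMeasure (volume.restrict (Set.Ioo (0:ℝ) (ℓ e))) :=
      fun e => hyd_finite (ℓ e)
    have hRabs : ∀ e, ∀ s ∈ Set.Icc (0:ℝ) (ℓ e), |R e s| ≤ Rmax := by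
      intro e s hs
      obtain ⟨h1, h2⟩ := hRbound e s hs
      rw [abs_of_pos (lt_of_lt_of_le hRmin h1)]; exact h2
    have hΔq : ∀ e, MemLp (fun s => q e s - q₂ e s) 2
        (volume.restrict (Set.Ioo (0:ℝ) (ℓ e))) := fun e => (hq2 e).sub (hq2' e)
    have hΔp' : ∀ e, MemLp (fun s => p' e s - p₂' e s) 2
        (volume.restrict (Set.Ioo (0:ℝ) (ℓ e))) := fun e => (hp'2 e).sub (hp'2' e)
    have hRΔq : ∀ e, MemLp (fun s => R e s * (q e s - q₂ e s)) 2
        (volume.restrict (Set.Ioo (0:ℝ) (ℓ e))) :=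
      fun e => hyd_memLp_mul (hRmeas e) (hRabs e) (hΔq e)
    set h : E → ℝ → ℝ := fun e s => R e s * (q e s - q₂ e s) + (p' e s - p₂' e s) with hh
    have hh2 : ∀ e, MemLp (h e) 2 (volume.restrict (Set.Ioo (0:ℝ) (ℓ e))) :=
      fun e => (hRΔq e).add (hΔp' e)
    have hkey : ∀ e, ∀ᵐ s ∂(volume.restrict (Set.Ioo (0:ℝ) (ℓ e))), h e s = 0 := by
      intro e
      haveI := hfin e
      set ψ : E → ℝ → ℝ := Function.update (fun _ => fun _ => (0:ℝ)) e (h e) with hψdef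
      have hψ : ∀ e', MemLp (ψ e') 2 (volume.restrict (Set.Ioo (0:ℝ) (ℓ e'))) := by
        intro e'
        rcases eq_or_ne e' e with rfl | hne
        · rw [hψdef, Function.update_self]; exact hh2 e'
        · rw [hψdef, Function.update_of_ne hne]; exact MemLp.zero'
      have e1 := hmom ψ hψ
      have e2 := hmom' ψ hψ
      have hcol : ∀ (u : E → ℝ → ℝ),
          (∑ e', ∫ s in Set.Ioo (0:ℝ) (ℓ e'), u e' s * ψ e' s)
            = ∫ s in Set.Ioo (0:ℝ) (ℓ e), u e s * h e s := by
        intro u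
        rw [Finset.sum_eq_single_of_mem e (Finset.mem_univ e)]
        · rw [hψdef, Function.update_self]
        · intro e' _ hne
          rw [hψdef, Function.update_of_ne hne]
          simp
      rw [hcol (fun e s => R e s * q e s), hcol p', hcol g] at e1
      rw [hcol (fun e s => R e s * q₂ e s), hcol p₂', hcol g] at e2
      have hint1 : Integrable (fun s => R e s * q e s * h e s)
          (volume.restrict (Set.Ioo (0:ℝ) (ℓ e))) :=
        hyd_integrable_mul (hyd_memLp_mul (hRmeas e) (hRabs e) (hq2 e)) (hh2 e)
      have hint2 : Integrable (fun s => R e s * q₂ e s * h e s)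
          (volume.restrict (Set.Ioo (0:ℝ) (ℓ e))) :=
        hyd_integrable_mul (hyd_memLp_mul (hRmeas e) (hRabs e) (hq2' e)) (hh2 e)
      have hint3 : Integrable (fun s => p' e s * h e s)
          (volume.restrict (Set.Ioo (0:ℝ) (ℓ e))) :=
        hyd_integrable_mul (hp'2 e) (hh2 e)
      have hint4 : Integrable (fun s => p₂' e s * h e s)
          (volume.restrict (Set.Ioo (0:ℝ) (ℓ e))) :=
        hyd_integrable_mul (hp'2' e) (hh2 e)
      have e4 : ∫ s in Set.Ioo (0:ℝ) (ℓ e), h e s * h e s = 0 := by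
        have hfe : (fun s => h e s * h e s) = fun s =>
            R e s * q e s * h e s - R e s * q₂ e s * h e s
              + (p' e s * h e s - p₂' e s * h e s) := by
          funext s; simp only [hh]; ring
        rw [hfe, integral_add (f := fun s => R e s * q e s * h e s - R e s * q₂ e s * h e s)
            (g := fun s => p' e s * h e s - p₂' e s * h e s)
            (hint1.sub hint2) (hint3.sub hint4),
          integral_sub hint1 hint2, integral_sub hint3 hint4]
        linarith
      have e5 := (integral_eq_zero_iff_of_nonneg_ae
        (Filter.Eventually.of_forall fun s => mul_self_nonneg _)
        (hyd_integrable_mul (hh2 e) (hh2 e))).mp e4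
      filter_upwards [e5] with s hs
      exact mul_self_eq_zero.mp (by simpa using hs)
    -- interval integrability helper
    have hIIgen : ∀ (e : E) (u : ℝ → ℝ), MemLp u 2 (volume.restrict (Set.Ioo (0:ℝ) (ℓ e))) →
        ∀ x ∈ Set.Icc (0:ℝ) (ℓ e), ∀ y ∈ Set.Icc (0:ℝ) (ℓ e),
          IntervalIntegrable u volume x y := by
      intro e u hu x hx y hy
      haveI := hfin e
      have h0 : Integrable u (volume.restrict (Set.Ioo (0:ℝ) (ℓ e))) :=
        hyd_integrable_of_mem2 hu
      rw [hyd_res_Icc] at h0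
      exact (IntegrableOn.mono_set h0 (Set.uIcc_subset_Icc hx hy)).intervalIntegrable
    -- the pressure difference is a valid test function
    have hftcd : ∀ e, ∀ x ∈ Set.Icc (0:ℝ) (ℓ e), ∀ y ∈ Set.Icc (0:ℝ) (ℓ e),
        (p e y - p₂ e y) - (p e x - p₂ e x) = ∫ s in x..y, (p' e s - p₂' e s) := by
      intro e x hx y hy
      rw [intervalIntegral.integral_sub (hIIgen e _ (hp'2 e) x hx y hy)
        (hIIgen e _ (hp'2' e) x hx y hy)]
      have h1 := hftc e x hx y hy
      have h2 := hftc' e x hx y hy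
      linarith
    have hmassd := hmass (fun e s => p e s - p₂ e s) (fun e s => p' e s - p₂' e s)
      (fun v => P v - P₂ v) hftcd hΔp'
      (fun e => show p e 0 - p₂ e 0 = P (src e) - P₂ (src e) by rw [hsrc e, hsrc' e])
      (fun e => show p e (ℓ e) - p₂ e (ℓ e) = P (dst e) - P₂ (dst e) by rw [hdst e, hdst' e])
      (fun v hv => show P v - P₂ v = 0 by rw [hbd v hv, hbd' v hv, sub_self])
    have hmassd' := hmass' (fun e s => p e s - p₂ e s) (fun e s => p' e s - p₂' e s)
      (fun v => P v - P₂ v) hftcd hΔp'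
      (fun e => show p e 0 - p₂ e 0 = P (src e) - P₂ (src e) by rw [hsrc e, hsrc' e])
      (fun e => show p e (ℓ e) - p₂ e (ℓ e) = P (dst e) - P₂ (dst e) by rw [hdst e, hdst' e])
      (fun v hv => show P v - P₂ v = 0 by rw [hbd v hv, hbd' v hv, sub_self])
    have hsum0 : ∑ e, ∫ s in Set.Ioo (0:ℝ) (ℓ e),
        (q e s - q₂ e s) * (p' e s - p₂' e s) = 0 := by
      have hper : ∀ e, ∫ s in Set.Ioo (0:ℝ) (ℓ e),
          (q e s - q₂ e s) * (p' e s - p₂' e s)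
          = (∫ s in Set.Ioo (0:ℝ) (ℓ e), q e s * (p' e s - p₂' e s))
            - ∫ s in Set.Ioo (0:ℝ) (ℓ e), q₂ e s * (p' e s - p₂' e s) := by
        intro e
        rw [← integral_sub (hyd_integrable_mul (hq2 e) (hΔp' e))
          (hyd_integrable_mul (hq2' e) (hΔp' e))]
        congr 1; funext s; ring
      simp only [hper]
      rw [Finset.sum_sub_distrib]
      rw [hmassd, hmassd']
      ring
    -- the edgewise energies
    have hIenonneg : ∀ e, 0 ≤ ∫ s in Set.Ioo (0:ℝ) (ℓ e),
        R e s * (q e s - q₂ e s) * (q e s - q₂ e s) := by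
      intro e
      refine integral_nonneg_of_ae ?_
      filter_upwards [ae_restrict_mem measurableSet_Ioo] with s hs
      have hR0 : (0:ℝ) ≤ R e s :=
        le_of_lt (lt_of_lt_of_le hRmin (hRbound e s (Set.Ioo_subset_Icc_self hs)).1)
      rw [mul_assoc]
      exact mul_nonneg hR0 (mul_self_nonneg _)
    have hIe : ∀ e, ∫ s in Set.Ioo (0:ℝ) (ℓ e),
        (q e s - q₂ e s) * (p' e s - p₂' e s)
        = - ∫ s in Set.Ioo (0:ℝ) (ℓ e), R e s * (q e s - q₂ e s) * (q e s - q₂ e s) := by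
      intro e
      rw [← MeasureTheory.integral_neg]
      refine integral_congr_ae ?_
      filter_upwards [hkey e] with s hs
      have hps : p' e s - p₂' e s = -(R e s * (q e s - q₂ e s)) := by
        simp only [hh] at hs; linarith
      rw [hps]; ring
    have hIe0 : ∀ e, ∫ s in Set.Ioo (0:ℝ) (ℓ e),
        R e s * (q e s - q₂ e s) * (q e s - q₂ e s) = 0 := by
      have hs2 : ∑ e, ∫ s in Set.Ioo (0:ℝ) (ℓ e),
          R e s * (q e s - q₂ e s) * (q e s - q₂ e s) = 0 := by
        have := hsum0
        simp only [hIe] at this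
        rw [Finset.sum_neg_distrib, neg_eq_zero] at this
        exact this
      intro e
      exact (Finset.sum_eq_zero_iff_of_nonneg (fun e _ => hIenonneg e)).mp hs2 e
        (Finset.mem_univ e)
    have hqq : ∀ e, ∀ᵐ s ∂(volume.restrict (Set.Ioo (0:ℝ) (ℓ e))), q e s = q₂ e s := by
      intro e
      have hz := (integral_eq_zero_iff_of_nonneg_ae ?_
        (hyd_integrable_mul (hRΔq e) (hΔq e))).mp (hIe0 e)
      · filter_upwards [hz, ae_restrict_mem measurableSet_Ioo] with s hs1 hs2
        have hR0 : (0:ℝ) < R e s :=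
          lt_of_lt_of_le hRmin (hRbound e s (Set.Ioo_subset_Icc_self hs2)).1
        have : R e s * (q e s - q₂ e s) * (q e s - q₂ e s) = 0 := by simpa using hs1
        rw [mul_assoc] at this
        rcases mul_eq_zero.mp this with h' | h'
        · exact absurd h' (ne_of_gt hR0)
        · have := mul_self_eq_zero.mp h'
          linarith
      · filter_upwards [ae_restrict_mem measurableSet_Ioo] with s hs
        have hR0 : (0:ℝ) ≤ R e s :=
          le_of_lt (lt_of_lt_of_le hRmin (hRbound e s (Set.Ioo_subset_Icc_self hs)).1)
        rw [mul_assoc]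
        exact mul_nonneg hR0 (mul_self_nonneg _)
    refine ⟨hqq, ?_⟩
    -- pressures
    have hΔp'0 : ∀ e, ∀ᵐ s ∂(volume.restrict (Set.Ioo (0:ℝ) (ℓ e))),
        p' e s - p₂' e s = 0 := by
      intro e
      filter_upwards [hkey e, hqq e] with s hs1 hs2
      simp only [hh] at hs1
      rw [hs2] at hs1
      simpa using hs1
    have hconst : ∀ e, ∀ x ∈ Set.Icc (0:ℝ) (ℓ e),
        p e x - p₂ e x = P (src e) - P₂ (src e) := by
      intro e x hx
      have h1 := hftc e 0 ⟨le_rfl, (hℓ e).le⟩ x hx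
      have h2 := hftc' e 0 ⟨le_rfl, (hℓ e).le⟩ x hx
      have hint0 : ∫ s in (0:ℝ)..x, p' e s = ∫ s in (0:ℝ)..x, p₂' e s := by
        rw [intervalIntegral.integral_of_le hx.1, intervalIntegral.integral_of_le hx.1,
          ← Measure.restrict_congr_set (Ioo_ae_eq_Ioc (μ := volume) (a := (0:ℝ)) (b := x))]
        refine integral_congr_ae ?_
        have hsub : Set.Ioo (0:ℝ) x ⊆ Set.Ioo (0:ℝ) (ℓ e) :=
          Set.Ioo_subset_Ioo le_rfl hx.2
        filter_upwards [ae_restrict_of_ae_restrict_of_subset hsub (hΔp'0 e)] with s hs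
        linarith
      rw [hsrc e] at h1
      rw [hsrc' e] at h2
      rw [hint0] at h1
      linarith
    have hDv : ∀ v, P v - P₂ v = 0 := by
      intro v
      refine hyd_propagate src dst (fun v => P v - P₂ v) ?_ ?_ (hreach v)
      · intro e
        have h1 := hconst e (ℓ e) ⟨(hℓ e).le, le_rfl⟩
        rw [hdst e, hdst' e] at h1
        exact h1.symm
      · intro v hv
        show P v - P₂ v = 0
        rw [hbd v hv, hbd' v hv, sub_self]
    intro e x hx
    have := hconst e x hx
    rw [hDv (src e)] at this
    linarith
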